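/- Let A be an n×n real matrix, B an n×m real matrix, Q an n×n real symmetric matrix, N ≥ 2, and let P_1, …, P_N be n×n real symmetric matrices, η_1, …, η_N, q_1, …, q_N ∈ ℝⁿ, and ξ_1, …, ξ_{N−1} ∈ ℝ, satisfying P_N = Q, η_N = q_N, and such that for each t = 1, …, N−1 the symmetric block matrix H_t := [[R_t, S_t, g_t], [S_tᵀ, AᵀP_{t+1}A + Q − P_t, β_t], [g_tᵀ, β_tᵀ, ξ_t]] is positive semidefinite, where R_t := BᵀP_{t+1}B + I, S_t := BᵀP_{t+1}A, g_t := Bᵀη_{t+1}, and β_t := q_t + Aᵀη_{t+1} − η_t. Then for every sequence x_1, …, x_N ∈ ℝⁿ and u_1, …, u_{N−1} ∈ ℝᵐ with x_{t+1} = A x_t + B u_t for t = 1, …, N−1, it holds that ½x_NᵀQx_N + q_NᵀxN − ½x_1ᵀP_1x_1 − η_1ᵀx_1 + Σ_{t=1}^{N−1}(½ξ_t + ½x_tᵀQx_t + q_tᵀx_t) ≥ −½ Σ_{t=1}^{N−1}‖u_t‖². -/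

import Mathlib

open Matrix Finset

lemma dp_tr' {a b : Type*} [Fintype a] [Fintype b] (M : Matrix a b ℝ) (v : b → ℝ) (w : a → ℝ) :
    v ⬝ᵥ Mᵀ *ᵥ w = (M *ᵥ v) ⬝ᵥ w := by
  rw [dotProduct_mulVec, vecMul_transpose]

lemma tcol {k : Type*} [Fintype k] (c : Matrix k (Fin 1) ℝ) (v : k → ℝ) :
    (cᵀ *ᵥ v) 0 = (fun i => c i 0) ⬝ᵥ v := by simp [mulVec, dotProduct, transpose_apply]

lemma colvec {k l : Type*} [Fintype l] (M : Matrix k l ℝ) (c : Matrix l (Fin 1) ℝ) :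
    (fun i => (M * c) i 0) = M *ᵥ (fun j => c j 0) := by
  ext i; simp [mul_apply, mulVec, dotProduct]

lemma step {n m : ℕ} (A : Matrix (Fin n) (Fin n) ℝ) (B : Matrix (Fin n) (Fin m) ℝ)
    (Q Pt Pn : Matrix (Fin n) (Fin n) ℝ) (et en qt : Matrix (Fin n) (Fin 1) ℝ) (ξt : ℝ)
    (hPn : Pn.IsSymm)
    (hH : (fromBlocks (Bᵀ * Pn * B + 1)
          (fromCols (Bᵀ * Pn * A) (Bᵀ * en))
          (fromRows (Bᵀ * Pn * A)ᵀ (Bᵀ * en)ᵀ)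
          (fromBlocks (Aᵀ * Pn * A + Q - Pt)
            (qt + Aᵀ * en - et)
            (qt + Aᵀ * en - et)ᵀ
            (ξt • (1 : Matrix (Fin 1) (Fin 1) ℝ)))).PosSemidef)
    (xv : Fin n → ℝ) (uv : Fin m → ℝ) :
    0 ≤ (1/2)*ξt + (1/2)*(xv ⬝ᵥ Q *ᵥ xv) + (fun i => qt i 0) ⬝ᵥ xv + (1/2)*(uv ⬝ᵥ uv)
      + (1/2)*((A *ᵥ xv + B *ᵥ uv) ⬝ᵥ Pn *ᵥ (A *ᵥ xv + B *ᵥ uv))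
      + (fun i => en i 0) ⬝ᵥ (A *ᵥ xv + B *ᵥ uv)
      - (1/2)*(xv ⬝ᵥ Pt *ᵥ xv) - (fun i => et i 0) ⬝ᵥ xv := by
  have h := hH.dotProduct_mulVec_nonneg (Sum.elim uv (Sum.elim xv (fun _ => 1)))
  have e1 : ∀ (c : Matrix (Fin n) (Fin 1) ℝ), c *ᵥ (fun _ : Fin 1 => (1:ℝ)) = fun i => c i 0 := by
    intro c; ext i; simp [mulVec, dotProduct]
  have e2 : ∀ (wv : Fin 1 → ℝ), (fun _ : Fin 1 => (1:ℝ)) ⬝ᵥ wv = wv 0 := by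
    intro wv; simp [dotProduct]
  have hPn' : Pnᵀ = Pn := hPn
  simp only [star_trivial, fromBlocks_mulVec, Sum.elim_comp_inl, Sum.elim_comp_inr,
    fromCols_mulVec_sumElim, fromRows_mulVec, sumElim_dotProduct_sumElim,
    dotProduct_add, add_mulVec, sub_mulVec, smul_mulVec, one_mulVec,
    ← Matrix.mulVec_mulVec, e1, e2, dp_tr', dotProduct_sub, sub_dotProduct,
    add_dotProduct, dotProduct_smul, smul_eq_mul, mulVec_add, mulVec_sub,
    Pi.add_apply, Pi.sub_apply, Pi.smul_apply] at h ⊢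
  have h1 : Bᵀ *ᵥ Pn *ᵥ A *ᵥ xv ⬝ᵥ uv = B *ᵥ uv ⬝ᵥ Pn *ᵥ A *ᵥ xv := by
    rw [dotProduct_comm, dp_tr']
  have h2 : ((Bᵀ * en)ᵀ *ᵥ uv) 0 = B *ᵥ uv ⬝ᵥ (fun i => en i 0) := by
    rw [tcol, colvec, dotProduct_comm, dp_tr']
  have h3 : (xv ⬝ᵥ fun i => (qt + Aᵀ * en - et) i 0) =
      xv ⬝ᵥ (fun i => qt i 0) + A *ᵥ xv ⬝ᵥ (fun i => en i 0) - xv ⬝ᵥ (fun i => et i 0) := by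
    have : (fun i => (qt + Aᵀ * en - et) i 0)
        = (fun i => qt i 0) + Aᵀ *ᵥ (fun i => en i 0) - (fun i => et i 0) := by
      ext i; simp [← colvec, Matrix.sub_apply, Matrix.add_apply]
    rw [this, dotProduct_sub, dotProduct_add, dp_tr']
  have h4 : (((qt + Aᵀ * en - et)ᵀ *ᵥ xv)) 0 =
      xv ⬝ᵥ (fun i => qt i 0) + A *ᵥ xv ⬝ᵥ (fun i => en i 0) - xv ⬝ᵥ (fun i => et i 0) := by
    rw [tcol, dotProduct_comm]; exact h3
  have hswap : A *ᵥ xv ⬝ᵥ Pn *ᵥ B *ᵥ uv = B *ᵥ uv ⬝ᵥ Pn *ᵥ A *ᵥ xv := by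
    conv_lhs => rw [← hPn']
    rw [dp_tr', dotProduct_comm]
  have c1 : (fun i => qt i 0) ⬝ᵥ xv = xv ⬝ᵥ (fun i => qt i 0) := dotProduct_comm _ _
  have c2 : (fun i => et i 0) ⬝ᵥ xv = xv ⬝ᵥ (fun i => et i 0) := dotProduct_comm _ _
  have c3 : (fun i => en i 0) ⬝ᵥ A *ᵥ xv = A *ᵥ xv ⬝ᵥ (fun i => en i 0) := dotProduct_comm _ _
  have c4 : (fun i => en i 0) ⬝ᵥ B *ᵥ uv = B *ᵥ uv ⬝ᵥ (fun i => en i 0) := dotProduct_comm _ _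
  rw [h1, h2, h3, h4] at h
  linarith [h, hswap, c1, c2, c3, c4]

lemma entry2 {k l n1 : ℕ} (a : Matrix (Fin k) (Fin n1) ℝ) (M : Matrix (Fin k) (Fin l) ℝ)
    (b : Matrix (Fin l) (Fin n1) ℝ) (i j : Fin n1) :
    (aᵀ * M * b) i j = (fun r => a r i) ⬝ᵥ M *ᵥ (fun r => b r j) := by
  simp [mul_apply, dotProduct, mulVec, Finset.sum_mul, Finset.mul_sum, mul_assoc]
  exact Finset.sum_comm ..

lemma entry1 {k n1 : ℕ} (a b : Matrix (Fin k) (Fin n1) ℝ) (i j : Fin n1) :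
    (aᵀ * b) i j = (fun r => a r i) ⬝ᵥ (fun r => b r j) := by
  simp [mul_apply, dotProduct]

set_option maxHeartbeats 1000000 in
theorem lower_bound_from_psd_blocks {n m : ℕ}
    (A : Matrix (Fin n) (Fin n) ℝ) (B : Matrix (Fin n) (Fin m) ℝ)
    (Q : Matrix (Fin n) (Fin n) ℝ) (hQ : Q.IsSymm)
    (N : ℕ) (hN : 2 ≤ N)
    (P : ℕ → Matrix (Fin n) (Fin n) ℝ) (hPsym : ∀ t, 1 ≤ t → t ≤ N → (P t).IsSymm)
    (η q : ℕ → Matrix (Fin n) (Fin 1) ℝ) (ξ : ℕ → ℝ)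
    (hPN : P N = Q) (hηN : η N = q N)
    (hH : ∀ t, 1 ≤ t → t ≤ N - 1 →
      (fromBlocks (Bᵀ * P (t + 1) * B + 1)
          (fromCols (Bᵀ * P (t + 1) * A) (Bᵀ * η (t + 1)))
          (fromRows (Bᵀ * P (t + 1) * A)ᵀ (Bᵀ * η (t + 1))ᵀ)
          (fromBlocks (Aᵀ * P (t + 1) * A + Q - P t)
            (q t + Aᵀ * η (t + 1) - η t)
            (q t + Aᵀ * η (t + 1) - η t)ᵀ
            (ξ t • (1 : Matrix (Fin 1) (Fin 1) ℝ)))).PosSemidef) :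
    ∀ (x : ℕ → Matrix (Fin n) (Fin 1) ℝ) (u : ℕ → Matrix (Fin m) (Fin 1) ℝ),
      (∀ t, 1 ≤ t → t ≤ N - 1 → x (t + 1) = A * x t + B * u t) →
      (1 / 2 : ℝ) * ((x N)ᵀ * Q * x N : Matrix (Fin 1) (Fin 1) ℝ) 0 0 +
          ((q N)ᵀ * x N : Matrix (Fin 1) (Fin 1) ℝ) 0 0 -
          (1 / 2 : ℝ) * ((x 1)ᵀ * P 1 * x 1 : Matrix (Fin 1) (Fin 1) ℝ) 0 0 -
          ((η 1)ᵀ * x 1 : Matrix (Fin 1) (Fin 1) ℝ) 0 0 +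
          ∑ t ∈ Icc 1 (N - 1),
            ((1 / 2 : ℝ) * ξ t +
              (1 / 2 : ℝ) * ((x t)ᵀ * Q * x t : Matrix (Fin 1) (Fin 1) ℝ) 0 0 +
              ((q t)ᵀ * x t : Matrix (Fin 1) (Fin 1) ℝ) 0 0) ≥
        -(1 / 2 : ℝ) * ∑ t ∈ Icc 1 (N - 1),
            ((u t)ᵀ * u t : Matrix (Fin 1) (Fin 1) ℝ) 0 0 := by
  intro x u hx
  set V : ℕ → ℝ := fun t =>
    (1/2)*((fun i => x t i 0) ⬝ᵥ P t *ᵥ fun i => x t i 0) +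
      ((fun i => η t i 0) ⬝ᵥ fun i => x t i 0) with hV
  have key : ∀ t, 1 ≤ t → t ≤ N - 1 →
      0 ≤ (1/2)*ξ t + (1/2)*((fun i => x t i 0) ⬝ᵥ Q *ᵥ fun i => x t i 0) +
        ((fun i => q t i 0) ⬝ᵥ fun i => x t i 0) +
        (1/2)*((fun i => u t i 0) ⬝ᵥ fun i => u t i 0) + (V (t+1) - V t) := by
    intro t h1 h2
    have hx1 : (fun i => x (t+1) i 0) = A *ᵥ (fun i => x t i 0) + B *ᵥ (fun i => u t i 0) := by
      rw [hx t h1 h2]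
      ext i
      simp [← colvec, Matrix.add_apply]
    have hs := step A B Q (P t) (P (t+1)) (η t) (η (t+1)) (q t) (ξ t)
      (hPsym (t+1) (by omega) (by omega)) (hH t h1 h2) (fun i => x t i 0) (fun i => u t i 0)
    rw [← hx1] at hs
    simp only [hV]
    linarith [hs]
  have hsum : 0 ≤ ∑ t ∈ Icc 1 (N-1),
      ((1/2)*ξ t + (1/2)*((fun i => x t i 0) ⬝ᵥ Q *ᵥ fun i => x t i 0) +
        ((fun i => q t i 0) ⬝ᵥ fun i => x t i 0) +
        (1/2)*((fun i => u t i 0) ⬝ᵥ fun i => u t i 0) + (V (t+1) - V t)) :=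
    Finset.sum_nonneg fun t ht => key t (mem_Icc.mp ht).1 (mem_Icc.mp ht).2
  have htel : ∑ t ∈ Icc 1 (N-1), (V (t+1) - V t) = V N - V 1 := by
    rw [show Icc 1 (N-1) = Ico 1 N from by rw [← Finset.Ico_add_one_right_eq_Icc]; congr 1; omega,
      Finset.sum_Ico_eq_sum_range]
    calc ∑ i ∈ range (N-1), (V (1+i+1) - V (1+i))
        = ∑ i ∈ range (N-1), ((fun j => V (j+1)) (i+1) - (fun j => V (j+1)) i) := by
          refine Finset.sum_congr rfl fun i _ => ?_
          simp [Nat.add_comm 1 i]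
      _ = (fun j => V (j+1)) (N-1) - (fun j => V (j+1)) 0 := by exact Finset.sum_range_sub (fun j => V (j+1)) (N-1)
      _ = V N - V 1 := by simp [show N - 1 + 1 = N from by omega]
  have hVN : V N = (1/2)*((fun i => x N i 0) ⬝ᵥ Q *ᵥ fun i => x N i 0) +
      ((fun i => q N i 0) ⬝ᵥ fun i => x N i 0) := by
    simp only [hV, hPN, hηN]
  have hV1 : V 1 = (1/2)*((fun i => x 1 i 0) ⬝ᵥ P 1 *ᵥ fun i => x 1 i 0) +
      ((fun i => η 1 i 0) ⬝ᵥ fun i => x 1 i 0) := by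
    simp only [hV]
  simp only [Finset.sum_add_distrib, htel, ← Finset.mul_sum] at hsum
  simp only [entry2, entry1, Finset.sum_add_distrib, ge_iff_le, ← Finset.mul_sum]
  linarith [hsum]
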